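/- In the group G with presentation ⟨α, β, γ, σ | α² = γ² = σ² = 1, α central⟩, the element α has order exactly 2 and the element β has infinite order. -/

import Mathlib

/-- Relators of ⟨α, β, γ, σ | α² = γ² = σ² = 1, α central⟩,
with α = of 0, β = of 1, γ = of 2, σ = of 3. -/
def rels : Set (FreeGroup (Fin 4)) :=
  { (FreeGroup.of 0) ^ 2, (FreeGroup.of 2) ^ 2, (FreeGroup.of 3) ^ 2,
    FreeGroup.of 0 * FreeGroup.of 1 * (FreeGroup.of 0)⁻¹ * (FreeGroup.of 1)⁻¹,
    FreeGroup.of 0 * FreeGroup.of 2 * (FreeGroup.of 0)⁻¹ * (FreeGroup.of 2)⁻¹,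
    FreeGroup.of 0 * FreeGroup.of 3 * (FreeGroup.of 0)⁻¹ * (FreeGroup.of 3)⁻¹ }

/-- Target group and assignment of generators. -/
def ftarget : Fin 4 → Multiplicative (ZMod 2) × Multiplicative ℤ :=
  ![(Multiplicative.ofAdd 1, 1), (1, Multiplicative.ofAdd 1),
    (Multiplicative.ofAdd 1, 1), (Multiplicative.ofAdd 1, 1)]

lemma fh : ∀ r ∈ rels, FreeGroup.lift ftarget r = 1 := by
  intro r hr
  simp only [rels, Set.mem_insert_iff, Set.mem_singleton_iff] at hr
  rcases hr with rfl | rfl | rfl | rfl | rfl | rfl <;>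
    simp [ftarget, Prod.ext_iff, ← ofAdd_add, mul_comm] <;> decide

noncomputable def φ : PresentedGroup rels →* Multiplicative (ZMod 2) × Multiplicative ℤ :=
  PresentedGroup.toGroup fh

lemma alpha_sq : (PresentedGroup.of (rels := rels) 0) ^ 2 = 1 := by
  have : ((PresentedGroup.mk rels) ((FreeGroup.of 0) ^ 2) : PresentedGroup rels) = 1 := by
    apply (QuotientGroup.eq_one_iff _).2
    exact Subgroup.subset_normalClosure (by simp [rels])
  simpa [PresentedGroup.of] using this

theorem alpha_order_two_beta_infinite_order :
    orderOf (PresentedGroup.of (rels := rels) 0) = 2 ∧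
    ¬ IsOfFinOrder (PresentedGroup.of (rels := rels) 1) := by
  constructor
  · have hne : (PresentedGroup.of (rels := rels) 0) ≠ 1 := by
      intro h
      have := congrArg φ h
      rw [φ, PresentedGroup.toGroup.of, map_one] at this
      simp [ftarget, Prod.ext_iff] at this
    exact orderOf_eq_prime alpha_sq hne
  · intro hfin
    have : IsOfFinOrder (φ (PresentedGroup.of (rels := rels) 1)) := φ.isOfFinOrder hfin
    rw [φ, PresentedGroup.toGroup.of] at this
    have h2 : IsOfFinOrder ((ftarget 1).2) := (MonoidHom.snd _ _).isOfFinOrder this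
    simp [ftarget] at h2
    rw [isOfFinOrder_iff_pow_eq_one] at h2
    obtain ⟨n, hn, he⟩ := h2
    have : (n : ℤ) = 0 := by
      have := congrArg Multiplicative.toAdd he
      simpa [← ofAdd_nsmul] using this
    omega
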